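/- Let w, w′ ∈ ℂ and let s be a real number with 0 ≤ s < 1. If |w| = |w′| = s, then |(1−w)·(1−w′)| ≤ ((1+s)/(1−s))·|1 − w·w′|. In particular 1 − w·w′ ≠ 0 and |(1−w)(1−w′)/(1−ww′)| ≤ (1+s)/(1−s). -/

import Mathlib

/-- If `|w| = |w′| = s < 1` in `ℂ`, then
`|(1−w)(1−w′)| ≤ ((1+s)/(1−s))·|1 − w w′|`; in particular `1 − w w′ ≠ 0` and
`|(1−w)(1−w′)/(1−w w′)| ≤ (1+s)/(1−s)`. -/
theorem stmt_13 (w w' : ℂ) (s : ℝ) (hs0 : 0 ≤ s) (hs1 : s < 1)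
    (hw : ‖w‖ = s) (hw' : ‖w'‖ = s) :
    ‖(1 - w) * (1 - w')‖ ≤ (1 + s) / (1 - s) * ‖1 - w * w'‖ ∧
    1 - w * w' ≠ 0 ∧
    ‖(1 - w) * (1 - w') / (1 - w * w')‖ ≤ (1 + s) / (1 - s) := by
  set a := ‖1 - w‖ with ha
  set b := ‖1 - w'‖ with hb
  set c := ‖1 - w * w'‖ with hc
  have hs1' : (0:ℝ) < 1 - s := by linarith
  have ha0 : 0 ≤ a := norm_nonneg _
  have hb0 : 0 ≤ b := norm_nonneg _
  have hc0 : 0 ≤ c := norm_nonneg _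
  -- a ≤ c + s*b
  have key1 : a ≤ c + s * b := by
    have : (1 - w) = (1 - w * w') + w * (w' - 1) := by ring
    calc a = ‖(1 - w * w') + w * (w' - 1)‖ := by rw [ha, this]
      _ ≤ c + ‖w * (w' - 1)‖ := norm_add_le _ _
      _ = c + s * b := by rw [norm_mul, hw, ← norm_neg (w' - 1)]; ring_nf; rfl
  have key2 : b ≤ c + s * a := by
    have : (1 - w') = (1 - w * w') + w' * (w - 1) := by ring
    calc b = ‖(1 - w * w') + w' * (w - 1)‖ := by rw [hb, this]
      _ ≤ c + ‖w' * (w - 1)‖ := norm_add_le _ _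
      _ = c + s * a := by rw [norm_mul, hw', ← norm_neg (w - 1)]; ring_nf; rfl
  -- b ≤ c / (1 - s)
  have hbc : b * (1 - s) ≤ c := by nlinarith
  have haS : a ≤ 1 + s := by
    calc a ≤ ‖(1:ℂ)‖ + ‖w‖ := norm_sub_le _ _
      _ = 1 + s := by rw [norm_one, hw]
  have hab : a * b ≤ (1 + s) / (1 - s) * c := by
    rw [div_mul_eq_mul_div, le_div_iff₀ hs1']
    nlinarith
  have hmain : ‖(1 - w) * (1 - w')‖ ≤ (1 + s) / (1 - s) * c := by
    rw [norm_mul]; exact hab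
  have hcpos : 0 < c := by
    have : ‖w * w'‖ < 1 := by rw [norm_mul, hw, hw']; nlinarith
    have := norm_sub_norm_le (1:ℂ) (w * w')
    rw [norm_one] at this
    linarith
  have hne : 1 - w * w' ≠ 0 := by
    intro h; rw [hc, h, norm_zero] at hcpos; exact lt_irrefl _ hcpos
  refine ⟨hmain, hne, ?_⟩
  rw [norm_div]
  rw [div_le_iff₀ hcpos]
  calc ‖(1 - w) * (1 - w')‖ ≤ (1 + s) / (1 - s) * c := hmain
    _ = (1 + s) / (1 - s) * c := rfl
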